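/- Let F be a finite field of order q^2 with q a power of 2, and let R be a finite subset of the nonzero algebraic closure of F which is the union of t distinct orbits under π(x) = x^{−q}. Then S = Σ over unordered pairs {u,v} ⊆ R, u ≠ v, of uv/(u−v)^2 lies in the subfield H of order q, and Tr_{H/F_2}(S) ≡ binom(|R|+1, 2) + t (mod 2). -/

import Mathlib

namespace Stmt11Aux

variable {K : Type*} [Field K] [CharP K 2]

/-- `w u v = u / (u - v)`. -/
noncomputable def w (u v : K) : K := u / (u - v)

/-- `g q y = (y ^ q)⁻¹`, the map `π`. -/
noncomputable def g (q : ℕ) (y : K) : K := (y ^ q)⁻¹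

variable {m q : ℕ}

lemma pow_q_inj (hq : q = 2 ^ m) : Function.Injective (fun x : K => x ^ q) := by
  intro x y h
  simp only [hq] at h
  have := sub_pow_char_pow (R := K) (p := 2) (n := m) (x := x) (y := y)
  rw [h, sub_self] at this
  have h0 : (2:ℕ) ^ m ≠ 0 := by positivity
  exact sub_eq_zero.mp (pow_eq_zero_iff h0 |>.mp this)

lemma g_inj (hq : q = 2 ^ m) : Function.Injective (g (K := K) q) :=
  fun _ _ h => pow_q_inj hq (inv_injective h)

lemma g_ne_zero {x : K} (hx : x ≠ 0) : g q x ≠ 0 := by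
  unfold g
  simpa using pow_ne_zero q hx

lemma w_flip {u v : K} (h : u ≠ v) : w v u = 1 + w u v := by
  have hsub : u - v ≠ 0 := sub_ne_zero.mpr h
  have hvu : v - u = u - v := by rw [← neg_sub, CharTwo.neg_eq]
  unfold w
  rw [hvu]
  field_simp
  have h2 : (2:K) = 0 := CharTwo.two_eq_zero
  linear_combination (v - u) * h2

lemma f_eq_w {u v : K} (h : u ≠ v) : u * v / (u - v) ^ 2 = w u v ^ 2 + w u v := by
  have hsub : u - v ≠ 0 := sub_ne_zero.mpr h
  unfold w
  field_simp
  have h2 : (2:K) = 0 := CharTwo.two_eq_zero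
  linear_combination (u*v - u^2) * h2

lemma w_pow_q (hq : q = 2 ^ m) {u v : K} (hu : u ≠ 0) (hv : v ≠ 0) (h : u ≠ v) :
    w u v ^ q = 1 + w (g q u) (g q v) := by
  have hne : u ^ q ≠ v ^ q := fun e => h (pow_q_inj hq e)
  have hu' : u ^ q ≠ 0 := pow_ne_zero _ hu
  have hv' : v ^ q ≠ 0 := pow_ne_zero _ hv
  have hsub : v ^ q - u ^ q ≠ 0 := sub_ne_zero.mpr (Ne.symm hne)
  have hq1 : w u v ^ q = w (u ^ q) (v ^ q) := by
    unfold w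
    rw [div_pow, hq, sub_pow_char_pow]
  have hq2 : w (g q u) (g q v) = w (v ^ q) (u ^ q) := by
    unfold w g
    rw [div_eq_div_iff]
    · field_simp
    · intro hzero
      apply hsub
      have : (u ^ q)⁻¹ = (v ^ q)⁻¹ := sub_eq_zero.mp hzero
      rw [inv_injective this, sub_self]
    · exact hsub
  rw [hq1, hq2, w_flip hne]
  have h2 : (2:K) = 0 := CharTwo.two_eq_zero
  linear_combination -h2

lemma f_pow_q (hq : q = 2 ^ m) {u v : K} (hu : u ≠ 0) (hv : v ≠ 0) (h : u ≠ v) :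
    (u * v / (u - v) ^ 2) ^ q = g q u * g q v / (g q u - g q v) ^ 2 := by
  have hgne : g q u ≠ g q v := fun e => h (g_inj hq e)
  rw [f_eq_w h, f_eq_w hgne]
  subst hq
  rw [add_pow_char_pow, pow_right_comm, w_pow_q rfl hu hv h, CharTwo.add_sq]
  have h2 : (2:K) = 0 := CharTwo.two_eq_zero
  linear_combination h2

lemma tele (hq : q = 2 ^ m) (x : K) :
    ∑ i ∈ Finset.range m, (x ^ 2 + x) ^ 2 ^ i = x ^ q + x := by
  subst hq
  have step : ∀ i ∈ Finset.range m,
      (x ^ 2 + x) ^ 2 ^ i = x ^ 2 ^ (i + 1) - x ^ 2 ^ i := by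
    intro i _
    rw [add_pow_char_pow, CharTwo.sub_eq_add, ← pow_mul, ← pow_succ']
  rw [Finset.sum_congr rfl step, Finset.sum_range_sub (fun i => x ^ 2 ^ i),
    CharTwo.sub_eq_add, pow_zero, pow_one]

lemma sum_pow_two_pow {ι : Type*} (s : Finset ι) (f : ι → K) (i : ℕ) :
    (∑ a ∈ s, f a) ^ 2 ^ i = ∑ a ∈ s, f a ^ 2 ^ i := by
  have : ExpChar K 2 := by
    have : Fact (Nat.Prime 2) := ⟨Nat.prime_two⟩
    infer_instance
  rw [← iterateFrobenius_def (R := K) (p := 2) (n := i), map_sum]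
  simp [iterateFrobenius_def]

/-- The symmetric function `B`. -/
noncomputable def BL (hq : q = 2 ^ m) : Sym2 K → K :=
  Sym2.lift ⟨fun u v => w (g q u) (g q v) + w u v, by
    intro a b
    rcases eq_or_ne a b with rfl | h
    · rfl
    · have hg : g q a ≠ g q b := fun hh => h (g_inj hq hh)
      show w (g q a) (g q b) + w a b = w (g q b) (g q a) + w b a
      rw [w_flip h, w_flip hg]
      have h2 : (2:K) = 0 := CharTwo.two_eq_zero
      linear_combination -h2⟩


end Stmt11Aux
open scoped Classical

namespace Stmt11Aux

variable {K : Type*} [Field K] [CharP K 2] {m q : ℕ}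

lemma orbit_sum (hq : q = 2 ^ m) (r : K) (ℓ : ℕ) (hℓ : 0 < ℓ)
    (hper : (g q)^[ℓ] r = r)
    (hinj : Set.InjOn (fun k => (g q)^[k] r) (Set.Iio ℓ)) :
    ∑ e ∈ ((Finset.range ℓ).image (fun k => (g q)^[k] r)).sym2.filter (fun e => ¬ e.IsDiag),
      BL hq e = ((ℓ - 1 : ℕ) : K) := by
  set rr : ℕ → K := fun k => (g q)^[k] r with hrr
  have hrrℓ : rr ℓ = rr 0 := hper
  have hrrsucc : ∀ k, rr (k+1) = g q (rr k) := fun k => Function.iterate_succ_apply' _ _ _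
  have hne : ∀ i < ℓ, ∀ j < ℓ, i ≠ j → rr i ≠ rr j := fun i hi j hj hij hgg =>
    hij (hinj (Set.mem_Iio.mpr hi) (Set.mem_Iio.mpr hj) hgg)
  have stepA : ∑ j ∈ Finset.range ℓ, ∑ i ∈ Finset.range j, BL hq s(rr i, rr j)
      = ∑ e ∈ ((Finset.range ℓ).image rr).sym2.filter (fun e => ¬ e.IsDiag), BL hq e := by
    rw [Finset.sum_sigma']
    refine Finset.sum_bij (fun p _ => s(rr p.2, rr p.1)) ?_ ?_ ?_ ?_
    · rintro ⟨j, i⟩ hp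
      simp only [Finset.mem_sigma, Finset.mem_range] at hp
      simp only [Finset.mem_filter, Finset.mk_mem_sym2_iff, Finset.mem_image,
        Sym2.mk_isDiag_iff, Finset.mem_range]
      exact ⟨⟨⟨i, by omega, rfl⟩, ⟨j, hp.1, rfl⟩⟩,
        hne i (by omega) j hp.1 (by omega)⟩
    · rintro ⟨j₁, i₁⟩ h₁ ⟨j₂, i₂⟩ h₂ heq
      simp only [Finset.mem_sigma, Finset.mem_range] at h₁ h₂
      rw [Sym2.eq_iff] at heq
      have : j₁ = j₂ ∧ i₁ = i₂ := by
        rcases heq with ⟨e1, e2⟩ | ⟨e1, e2⟩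
        · exact ⟨hinj (Set.mem_Iio.mpr (by omega)) (Set.mem_Iio.mpr (by omega)) e2,
            hinj (Set.mem_Iio.mpr (by omega)) (Set.mem_Iio.mpr (by omega)) e1⟩
        · have hj : i₁ = j₂ := hinj (Set.mem_Iio.mpr (by omega)) (Set.mem_Iio.mpr (by omega)) e1
          have hi : j₁ = i₂ := hinj (Set.mem_Iio.mpr (by omega)) (Set.mem_Iio.mpr (by omega)) e2
          omega
      obtain ⟨rfl, rfl⟩ := this
      rfl
    · intro e he
      induction e using Sym2.ind with
      | _ x y =>
        simp only [Finset.mem_filter, Finset.mk_mem_sym2_iff, Finset.mem_image,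
          Finset.mem_range, Sym2.mk_isDiag_iff] at he
        obtain ⟨⟨⟨i, hi, rfl⟩, ⟨j, hj, rfl⟩⟩, hd⟩ := he
        have hij : i ≠ j := fun h => hd (by rw [h])
        rcases lt_or_gt_of_ne hij with h | h
        · exact ⟨⟨j, i⟩, by simp [Finset.mem_sigma, Finset.mem_range, hj, h], rfl⟩
        · exact ⟨⟨i, j⟩, by simp [Finset.mem_sigma, Finset.mem_range, hi, h], Sym2.eq_swap⟩
    · rintro ⟨j, i⟩ hp
      rfl
  rw [← stepA]
  have hBL : ∀ i j : ℕ, BL hq s(rr i, rr j)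
      = w (rr (i+1)) (rr (j+1)) + w (rr i) (rr j) := by
    intro i j
    rw [BL, Sym2.lift_mk]
    simp only [hrrsucc]
  simp only [hBL]
  set W : ℕ → ℕ → K := fun i j => w (rr i) (rr j) with hW
  set h : ℕ → K := fun j => ∑ i ∈ Finset.Ico 1 j, W i j with hh
  have inner1 : ∀ j : ℕ, ∑ i ∈ Finset.range j, W (i+1) (j+1) = h (j+1) := by
    intro j
    show _ = ∑ i ∈ Finset.Ico 1 (j+1), W i (j+1)
    rw [Finset.sum_Ico_eq_sum_range]
    simp only [Nat.add_sub_cancel]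
    exact Finset.sum_congr rfl fun i _ => by rw [add_comm 1 i]
  have T1 : ∑ j ∈ Finset.range ℓ, ∑ i ∈ Finset.range j, W (i+1) (j+1)
      = ∑ j ∈ Finset.Ico 1 ℓ, h j + h ℓ := by
    calc ∑ j ∈ Finset.range ℓ, ∑ i ∈ Finset.range j, W (i+1) (j+1)
        = ∑ j ∈ Finset.range ℓ, h (j+1) := Finset.sum_congr rfl fun j _ => inner1 j
      _ = ∑ j ∈ Finset.Ico 1 (ℓ+1), h j := by
          rw [Finset.sum_Ico_eq_sum_range]
          simp only [Nat.add_sub_cancel]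
          exact (Finset.sum_congr rfl fun j _ => by rw [add_comm 1 j]).symm
      _ = ∑ j ∈ Finset.Ico 1 ℓ, h j + h ℓ := Finset.sum_Ico_succ_top hℓ _
  have T0 : ∑ j ∈ Finset.range ℓ, ∑ i ∈ Finset.range j, W i j
      = ∑ j ∈ Finset.Ico 1 ℓ, W 0 j + ∑ j ∈ Finset.Ico 1 ℓ, h j := by
    simp only [Finset.range_eq_Ico]; rw [Finset.sum_eq_sum_Ico_succ_bot hℓ
      (f := fun j => ∑ i ∈ Finset.Ico 0 j, W i j)]
    have h0 : ∑ i ∈ Finset.Ico 0 0, W i 0 = 0 := by simp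
    rw [h0, zero_add]
    have inner0 : ∀ j ∈ Finset.Ico 1 ℓ, ∑ i ∈ Finset.Ico 0 j, W i j = W 0 j + h j := by
      intro j hj
      simp only [Finset.mem_Ico] at hj
      exact Finset.sum_eq_sum_Ico_succ_bot hj.1 _
    rw [Finset.sum_congr rfl inner0, Finset.sum_add_distrib]
  have hℓval : h ℓ = ((ℓ - 1 : ℕ) : K) + ∑ i ∈ Finset.Ico 1 ℓ, W 0 i := by
    show ∑ i ∈ Finset.Ico 1 ℓ, W i ℓ = _
    have : ∀ i ∈ Finset.Ico 1 ℓ, W i ℓ = 1 + W 0 i := by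
      intro i hi
      simp only [Finset.mem_Ico] at hi
      have : rr 0 ≠ rr i := hne 0 hℓ i hi.2 (by omega)
      show w (rr i) (rr ℓ) = 1 + w (rr 0) (rr i)
      rw [hrrℓ, w_flip this]
    rw [Finset.sum_congr rfl this, Finset.sum_add_distrib, Finset.sum_const,
      Nat.card_Ico, nsmul_eq_mul, mul_one]
  simp only [Finset.sum_add_distrib]
  rw [T1, T0, hℓval]
  have hXX : (∑ j ∈ Finset.Ico 1 ℓ, h j) + (∑ j ∈ Finset.Ico 1 ℓ, h j) = 0 :=
    CharTwo.add_self_eq_zero _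
  have hYY : (∑ j ∈ Finset.Ico 1 ℓ, W 0 j) + (∑ j ∈ Finset.Ico 1 ℓ, W 0 j) = 0 :=
    CharTwo.add_self_eq_zero _
  linear_combination hXX + hYY



lemma cross_sum (hq : q = 2 ^ m) (P U : Finset K) (hP : P.image (g q) = P)
    (hU : U.image (g q) = U) :
    ∑ p ∈ P ×ˢ U, (w (g q p.1) (g q p.2) + w p.1 p.2) = 0 := by
  have hbij : ∑ p ∈ P ×ˢ U, w (g q p.1) (g q p.2) = ∑ p ∈ P ×ˢ U, w p.1 p.2 := by
    refine Finset.sum_bij (fun p _ => (g q p.1, g q p.2)) ?_ ?_ ?_ ?_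
    · rintro ⟨a, b⟩ hp
      simp only [Finset.mem_product] at hp ⊢
      exact ⟨hP ▸ Finset.mem_image_of_mem _ hp.1, hU ▸ Finset.mem_image_of_mem _ hp.2⟩
    · rintro ⟨a, b⟩ _ ⟨c, d⟩ _ heq
      simp only [Prod.mk.injEq] at heq ⊢
      exact ⟨g_inj hq heq.1, g_inj hq heq.2⟩
    · rintro ⟨a, b⟩ hp
      simp only [Finset.mem_product] at hp
      obtain ⟨a', ha', rfl⟩ := Finset.mem_image.mp (hP ▸ hp.1)
      obtain ⟨b', hb', rfl⟩ := Finset.mem_image.mp (hU ▸ hp.2)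
      exact ⟨(a', b'), Finset.mem_product.mpr ⟨ha', hb'⟩, rfl⟩
    · rintro ⟨a, b⟩ _
      rfl
  rw [Finset.sum_add_distrib, hbij]
  exact CharTwo.add_self_eq_zero _

lemma pairs_union (s t : Finset K) (hst : Disjoint s t) :
    (s ∪ t).sym2.filter (fun e => ¬ e.IsDiag) =
      ((s.sym2.filter (fun e => ¬ e.IsDiag)) ∪ (t.sym2.filter (fun e => ¬ e.IsDiag))) ∪
        (s ×ˢ t).image (fun p => s(p.1, p.2)) := by
  have hd := Finset.disjoint_left.mp hst
  ext e
  induction e using Sym2.ind with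
  | _ a b =>
    simp only [Finset.mem_filter, Finset.mk_mem_sym2_iff, Finset.mem_union, Finset.mem_image,
      Sym2.mk_isDiag_iff, Finset.mem_product, Prod.exists, Sym2.eq_iff]
    constructor
    · rintro ⟨⟨ha, hb⟩, hab⟩
      rcases ha with ha | ha <;> rcases hb with hb | hb
      · exact Or.inl (Or.inl ⟨⟨ha, hb⟩, hab⟩)
      · exact Or.inr ⟨a, b, ⟨ha, hb⟩, Or.inl ⟨rfl, rfl⟩⟩
      · exact Or.inr ⟨b, a, ⟨hb, ha⟩, Or.inr ⟨rfl, rfl⟩⟩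
      · exact Or.inl (Or.inr ⟨⟨ha, hb⟩, hab⟩)
    · rintro ((⟨⟨ha, hb⟩, hab⟩ | ⟨⟨ha, hb⟩, hab⟩) | ⟨x, y, ⟨hx, hy⟩, (⟨rfl, rfl⟩ | ⟨rfl, rfl⟩)⟩)
      · exact ⟨⟨Or.inl ha, Or.inl hb⟩, hab⟩
      · exact ⟨⟨Or.inr ha, Or.inr hb⟩, hab⟩
      · exact ⟨⟨Or.inl hx, Or.inr hy⟩, fun h => hd (h ▸ hx) hy⟩
      · exact ⟨⟨Or.inr hy, Or.inl hx⟩, fun h => hd (h ▸ hx) hy⟩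

lemma pairs_union_disj1 (s t : Finset K) (hst : Disjoint s t) :
    Disjoint (s.sym2.filter (fun e => ¬ e.IsDiag)) (t.sym2.filter (fun e => ¬ e.IsDiag)) := by
  rw [Finset.disjoint_left]
  intro e he he'
  induction e using Sym2.ind with
  | _ a b =>
    simp only [Finset.mem_filter, Finset.mk_mem_sym2_iff] at he he'
    exact Finset.disjoint_left.mp hst he.1.1 he'.1.1

lemma pairs_union_disj2 (s t : Finset K) (hst : Disjoint s t) :
    Disjoint ((s.sym2.filter (fun e => ¬ e.IsDiag)) ∪ (t.sym2.filter (fun e => ¬ e.IsDiag)))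
      ((s ×ˢ t).image (fun p => s(p.1, p.2))) := by
  rw [Finset.disjoint_left]
  intro e he he'
  induction e using Sym2.ind with
  | _ a b =>
    have hd := Finset.disjoint_left.mp hst
    simp only [Finset.mem_union, Finset.mem_filter, Finset.mk_mem_sym2_iff] at he
    simp only [Finset.mem_image, Finset.mem_product, Prod.exists, Sym2.eq_iff] at he'
    obtain ⟨x, y, ⟨hx, hy⟩, (⟨rfl, rfl⟩ | ⟨rfl, rfl⟩)⟩ := he'
    · rcases he with ⟨⟨_, hb⟩, _⟩ | ⟨⟨ha, _⟩, _⟩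
      · exact hd hb hy
      · exact hd hx ha
    · rcases he with ⟨⟨ha, _⟩, _⟩ | ⟨⟨_, hb⟩, _⟩
      · exact hd ha hy
      · exact hd hx hb

lemma sum_cross (hq : q = 2 ^ m) (P U : Finset K) (hPU : Disjoint P U)
    (hP : P.image (g q) = P) (hU : U.image (g q) = U) :
    ∑ e ∈ (P ×ˢ U).image (fun p => s(p.1, p.2)), BL hq e = 0 := by
  rw [Finset.sum_image]
  · rw [← cross_sum hq P U hP hU]
    refine Finset.sum_congr rfl fun p hp => ?_
    rw [BL, Sym2.lift_mk]
  · rintro ⟨a, b⟩ hab ⟨c, d⟩ hcd heq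
    simp only [Finset.mem_coe, Finset.mem_product] at hab hcd
    rw [Sym2.eq_iff] at heq
    rcases heq with ⟨rfl, rfl⟩ | ⟨rfl, rfl⟩
    · rfl
    · exact absurd hab.1 (Finset.disjoint_right.mp hPU hcd.2)

lemma biUnion_sum (hq : q = 2 ^ m) (Os : Finset (Finset K))
    (hdi : ∀ P ∈ Os, ∀ Q ∈ Os, P ≠ Q → Disjoint P Q)
    (hst : ∀ P ∈ Os, P.image (g q) = P)
    (hval : ∀ P ∈ Os, ∑ e ∈ P.sym2.filter (fun e => ¬ e.IsDiag), BL hq e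
      = ((P.card + 1 : ℕ) : K)) :
    ∑ e ∈ (Os.biUnion id).sym2.filter (fun e => ¬ e.IsDiag), BL hq e
      = ((∑ P ∈ Os, (P.card + 1) : ℕ) : K) := by
  induction Os using Finset.cons_induction with
  | empty => simp
  | cons P Os' hP ih =>
    have hdi' : ∀ Q ∈ Os', ∀ Q' ∈ Os', Q ≠ Q' → Disjoint Q Q' :=
      fun Q hQ Q' hQ' => hdi Q (Finset.mem_cons_of_mem hQ) Q' (Finset.mem_cons_of_mem hQ')
    have hst' : ∀ Q ∈ Os', Q.image (g q) = Q := fun Q hQ => hst Q (Finset.mem_cons_of_mem hQ)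
    have hval' : ∀ Q ∈ Os', ∑ e ∈ Q.sym2.filter (fun e => ¬ e.IsDiag), BL hq e
        = ((Q.card + 1 : ℕ) : K) := fun Q hQ => hval Q (Finset.mem_cons_of_mem hQ)
    have hPmem : P ∈ Finset.cons P Os' hP := Finset.mem_cons_self _ _
    have hdisjPU : Disjoint P (Os'.biUnion id) := by
      rw [Finset.disjoint_biUnion_right]
      intro Q hQ
      exact hdi P hPmem Q (Finset.mem_cons_of_mem hQ) (fun h => hP (h ▸ hQ))
    have hUst : (Os'.biUnion id).image (g q) = Os'.biUnion id := by
      rw [Finset.biUnion_image]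
      exact Finset.biUnion_congr rfl hst'
    have hbu : (Finset.cons P Os' hP).biUnion id = P ∪ Os'.biUnion id := by
      rw [Finset.cons_eq_insert, Finset.biUnion_insert]
      rfl
    rw [hbu, pairs_union P (Os'.biUnion id) hdisjPU,
      Finset.sum_union (pairs_union_disj2 P (Os'.biUnion id) hdisjPU),
      Finset.sum_union (pairs_union_disj1 P (Os'.biUnion id) hdisjPU),
      sum_cross hq P (Os'.biUnion id) hdisjPU (hst P hPmem) hUst,
      hval P hPmem, ih hdi' hst' hval', Finset.sum_cons, add_zero]
    push_cast
    ring

lemma iterate_ne_zero (hq : q = 2 ^ m) {r : K} (hr : r ≠ 0) (k : ℕ) : (g q)^[k] r ≠ 0 := by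
  induction k with
  | zero => exact hr
  | succ n ihn => rw [Function.iterate_succ_apply']; exact g_ne_zero ihn

lemma orbit_periodic (hq : q = 2 ^ m) (r : K) (P : Finset K)
    (hmem : ∀ x, x ∈ P ↔ ∃ k, (g q)^[k] r = x) : r ∈ Function.periodicPts (g q) := by
  have hmaps : ∀ k ∈ Finset.range (P.card + 1), (g q)^[k] r ∈ P :=
    fun k _ => (hmem _).mpr ⟨k, rfl⟩
  have hcard : P.card < (Finset.range (P.card + 1)).card := by simp
  obtain ⟨i, hi, j, hj, hij, heq⟩ :=
    Finset.exists_ne_map_eq_of_card_lt_of_maps_to hcard hmaps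
  wlog hlt : i < j generalizing i j
  · exact this j hj i hi hij.symm heq.symm (by omega)
  have : (g q)^[i] ((g q)^[j - i] r) = (g q)^[i] r := by
    rw [← Function.iterate_add_apply]
    rw [show i + (j - i) = j by omega]
    exact heq.symm
  have hper : (g q)^[j - i] r = r := (g_inj hq).iterate i this
  exact Function.mk_mem_periodicPts (by omega) hper

lemma orbit_structure (hq : q = 2 ^ m) (r : K) (hr : r ≠ 0) (P : Finset K)
    (hmem : ∀ x, x ∈ P ↔ ∃ k, (g q)^[k] r = x) :
    0 < P.card ∧ P.image (g q) = P ∧ (0:K) ∉ P ∧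
      P = (Finset.range P.card).image (fun k => (g q)^[k] r) ∧
      (g q)^[P.card] r = r ∧
      Set.InjOn (fun k => (g q)^[k] r) (Set.Iio P.card) := by
  have hperio := orbit_periodic hq r P hmem
  set ℓ := Function.minimalPeriod (g q) r with hℓdef
  have hℓ : 0 < ℓ := Function.minimalPeriod_pos_of_mem_periodicPts hperio
  have hPeq : P = (Finset.range ℓ).image (fun k => (g q)^[k] r) := by
    ext x
    rw [hmem x]
    simp only [Finset.mem_image, Finset.mem_range]
    constructor
    · rintro ⟨k, rfl⟩
      exact ⟨k % ℓ, Nat.mod_lt _ hℓ, Function.iterate_mod_minimalPeriod_eq⟩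
    · rintro ⟨k, _, rfl⟩
      exact ⟨k, rfl⟩
  have hinj : Set.InjOn (fun k => (g q)^[k] r) (Set.Iio ℓ) :=
    Function.iterate_injOn_Iio_minimalPeriod
  have hcard : P.card = ℓ := by
    rw [hPeq, Finset.card_image_of_injOn, Finset.card_range]
    intro a ha b hb hab
    exact hinj (by simpa using ha) (by simpa using hb) hab
  have hzero : (0:K) ∉ P := by
    intro h0
    obtain ⟨k, hk⟩ := (hmem 0).mp h0
    exact iterate_ne_zero hq hr k hk
  have himg : P.image (g q) = P := by
    have hsub : P.image (g q) ⊆ P := by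
      intro x hx
      obtain ⟨y, hy, rfl⟩ := Finset.mem_image.mp hx
      obtain ⟨k, rfl⟩ := (hmem y).mp hy
      exact (hmem _).mpr ⟨k + 1, Function.iterate_succ_apply' _ _ _⟩
    have hcard2 : P.card ≤ (P.image (g q)).card := by
      rw [Finset.card_image_of_injective _ (g_inj hq)]
    exact Finset.eq_of_subset_of_card_le hsub hcard2
  rw [hcard]
  exact ⟨hℓ, himg, hzero, hPeq, Function.iterate_minimalPeriod, hinj⟩

lemma orbit_disjoint (hq : q = 2 ^ m) (r r' : K) (P Q : Finset K)
    (hmemP : ∀ x, x ∈ P ↔ ∃ k, (g q)^[k] r = x)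
    (hmemQ : ∀ x, x ∈ Q ↔ ∃ k, (g q)^[k] r' = x)
    (hne : P ≠ Q) : Disjoint P Q := by
  have hperP := orbit_periodic hq r P hmemP
  have hperQ := orbit_periodic hq r' Q hmemQ
  rw [Finset.disjoint_left]
  intro x hxP hxQ
  apply hne
  obtain ⟨a, ha⟩ := (hmemP x).mp hxP
  obtain ⟨b, hb⟩ := (hmemQ x).mp hxQ
  have back : ∀ (y : K) (n : ℕ), y ∈ Function.periodicPts (g q) →
      ∀ z, (g q)^[n] y = z → ∃ c, (g q)^[c] z = y := by
    intro y n hy z hz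
    set L := Function.minimalPeriod (g q) y with hL
    have hLpos : 0 < L := Function.minimalPeriod_pos_of_mem_periodicPts hy
    have hiter : (g q)^[L * (n + 1)] y = y :=
      (Function.isPeriodicPt_minimalPeriod (g q) y).mul_const (n + 1)
    refine ⟨L * (n + 1) - n, ?_⟩
    rw [← hz, ← Function.iterate_add_apply]
    have hle : n + 1 ≤ L * (n + 1) := Nat.le_mul_of_pos_left _ hLpos
    rw [show L * (n + 1) - n + n = L * (n + 1) by omega]
    exact hiter
  obtain ⟨c, hc⟩ := back r a hperP x ha
  obtain ⟨d, hd⟩ := back r' b hperQ x hb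
  ext z
  rw [hmemP z, hmemQ z]
  constructor
  · rintro ⟨k, rfl⟩
    refine ⟨k + c + b, ?_⟩
    rw [show k + c + b = k + (c + b) by ring, Function.iterate_add_apply,
      Function.iterate_add_apply, hb, hc]
  · rintro ⟨k, rfl⟩
    refine ⟨k + d + a, ?_⟩
    rw [show k + d + a = k + (d + a) by ring, Function.iterate_add_apply,
      Function.iterate_add_apply, ha, hd]

lemma sum_pow_q {ι : Type*} (hq : q = 2 ^ m) (s : Finset ι) (f : ι → K) :
    (∑ a ∈ s, f a) ^ q = ∑ a ∈ s, f a ^ q := by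
  subst hq; exact sum_pow_two_pow s f m

lemma sum_map_orbit (hq : q = 2 ^ m) (R : Finset K) (hR : R.image (g q) = R)
    (f : Sym2 K → K) :
    ∑ e ∈ R.sym2.filter (fun e => ¬ e.IsDiag), f (Sym2.map (g q) e)
      = ∑ e ∈ R.sym2.filter (fun e => ¬ e.IsDiag), f e := by
  refine Finset.sum_bij (fun e _ => Sym2.map (g q) e) ?_ ?_ ?_ ?_
  · intro e he
    induction e using Sym2.ind with
    | _ a b =>
      simp only [Finset.mem_filter, Finset.mk_mem_sym2_iff, Sym2.mk_isDiag_iff,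
        Sym2.map_pair_eq] at he ⊢
      exact ⟨⟨hR ▸ Finset.mem_image_of_mem _ he.1.1, hR ▸ Finset.mem_image_of_mem _ he.1.2⟩,
        fun hgg => he.2 (g_inj hq hgg)⟩
  · intro e₁ _ e₂ _ heq
    exact Sym2.map.injective (g_inj hq) heq
  · intro e he
    induction e using Sym2.ind with
    | _ a b =>
      simp only [Finset.mem_filter, Finset.mk_mem_sym2_iff, Sym2.mk_isDiag_iff] at he
      obtain ⟨a', ha', rfl⟩ := Finset.mem_image.mp (hR ▸ he.1.1)
      obtain ⟨b', hb', rfl⟩ := Finset.mem_image.mp (hR ▸ he.1.2)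
      refine ⟨s(a', b'), ?_, Sym2.map_pair_eq _ _ _⟩
      simp only [Finset.mem_filter, Finset.mk_mem_sym2_iff, Sym2.mk_isDiag_iff]
      exact ⟨⟨ha', hb'⟩, fun hab => he.2 (by rw [hab])⟩
  · intro e _
    rfl

lemma tr_pointwise (hq : q = 2 ^ m) {u v : K} (hu : u ≠ 0) (hv : v ≠ 0) (huv : u ≠ v) :
    ∑ i ∈ Finset.range m, (u * v / (u - v) ^ 2) ^ 2 ^ i = 1 + BL hq s(u, v) := by
  have : ∀ i ∈ Finset.range m, (u * v / (u - v) ^ 2) ^ 2 ^ i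
      = (w u v ^ 2 + w u v) ^ 2 ^ i := fun i _ => by rw [f_eq_w huv]
  rw [Finset.sum_congr rfl this, tele hq, w_pow_q hq hu hv huv, BL, Sym2.lift_mk]
  ring

lemma filter_diag_eq (R : Finset K) :
    R.sym2.filter (fun e => e.IsDiag) = R.image Sym2.diag := by
  ext e
  induction e using Sym2.ind with
  | _ a b =>
    simp only [Finset.mem_filter, Finset.mk_mem_sym2_iff, Sym2.mk_isDiag_iff,
      Finset.mem_image, Sym2.diag, Sym2.eq_iff]
    constructor
    · rintro ⟨⟨ha, _⟩, rfl⟩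
      exact ⟨a, ha, Or.inl ⟨rfl, rfl⟩⟩
    · rintro ⟨x, hx, (⟨rfl, rfl⟩ | ⟨rfl, rfl⟩)⟩ <;> exact ⟨⟨hx, hx⟩, rfl⟩

lemma card_pairs (R : Finset K) :
    (R.sym2.filter (fun e => ¬ e.IsDiag)).card = R.card.choose 2 := by
  have h1 := Finset.card_filter_add_card_filter_not
    (s := R.sym2) (p := fun e => e.IsDiag)
  rw [filter_diag_eq, Finset.card_sym2] at h1
  have h2 : (R.image Sym2.diag).card = R.card :=
    Finset.card_image_of_injective _ Sym2.diag_injective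
  have h3 : (R.card + 1).choose 2 = R.card.choose 2 + R.card := by
    rw [Nat.choose_succ_succ, Nat.choose_one_right, add_comm]
  omega

end Stmt11Aux

open scoped Classical in
/-- For `F` of order `q^2`, `q = 2^m`, and `R` a finite subset of the nonzero algebraic
closure that is the union of `t` distinct orbits under `π(x) = x^{-q}`, the sum
`S = Σ_{{u,v}⊆R, u≠v} uv/(u-v)^2` lies in the half field `H` of order `q` (`S^q = S`) and
`Tr_{H/F_2}(S) = S + S^2 + ⋯ + S^(q/2)` equals `binom(|R|+1,2) + t mod 2`. -/
theorem stmt11 (m q : ℕ) (hm : 0 < m) (hq : q = 2 ^ m)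
    (F : Type) [Field F] [Fintype F] (hF : Fintype.card F = q ^ 2)
    (R : Finset (AlgebraicClosure F)) (t : ℕ)
    (Os : Finset (Finset (AlgebraicClosure F))) (ht : Os.card = t)
    (horb : ∀ P ∈ Os, ∃ r : AlgebraicClosure F, r ≠ 0 ∧
      ∀ x, x ∈ P ↔ ∃ k : ℕ, (fun y : AlgebraicClosure F => (y ^ q)⁻¹)^[k] r = x)
    (hunion : R = Os.biUnion id) :
    let S : AlgebraicClosure F :=
      ∑ e ∈ R.sym2.filter (fun e => ¬ e.IsDiag),
        Sym2.lift ⟨fun u v => u * v / (u - v) ^ 2, by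
          intro a b
          show a * b / (a - b) ^ 2 = b * a / (b - a) ^ 2
          rw [mul_comm a b, show (a - b) ^ 2 = (b - a) ^ 2 from by ring]⟩ e
    S ^ q = S ∧
      ∑ i ∈ Finset.range m, S ^ 2 ^ i
        = (((R.card + 1).choose 2 + t : ℕ) : AlgebraicClosure F) := by
  -- characteristic 2
  haveI hcharF : CharP F 2 := by
    obtain ⟨p, _inst⟩ := CharP.exists F
    haveI := _inst
    obtain ⟨n, hp, hcard⟩ := FiniteField.card F p
    have hpow : (p:ℕ) ^ (n:ℕ) = 2 ^ (2 * m) := by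
      rw [← hcard, hF, hq, ← pow_mul, mul_comm]
    have hdvd : p ∣ 2 ^ (2 * m) := hpow ▸ dvd_pow_self p n.ne_zero
    have hp2 : p = 2 :=
      (Nat.prime_dvd_prime_iff_eq hp Nat.prime_two).mp (hp.dvd_of_dvd_pow hdvd)
    exact hp2 ▸ _inst
  haveI : CharP (AlgebraicClosure F) 2 := inferInstance
  -- orbit data
  have hgdef : (fun y : AlgebraicClosure F => (y ^ q)⁻¹) = Stmt11Aux.g q := rfl
  rw [hgdef] at horb
  have hstr : ∀ P ∈ Os, 0 < P.card ∧ P.image (Stmt11Aux.g q) = P ∧ (0:AlgebraicClosure F) ∉ P ∧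
      (∃ r : AlgebraicClosure F, P = (Finset.range P.card).image (fun k => (Stmt11Aux.g q)^[k] r) ∧
        (Stmt11Aux.g q)^[P.card] r = r ∧
        Set.InjOn (fun k => (Stmt11Aux.g q)^[k] r) (Set.Iio P.card)) := by
    intro P hP
    obtain ⟨r, hr0, hmem⟩ := horb P hP
    obtain ⟨h1, h2, h3, h4, h5, h6⟩ := Stmt11Aux.orbit_structure hq r hr0 P hmem
    exact ⟨h1, h2, h3, r, h4, h5, h6⟩
  have hdi : ∀ P ∈ Os, ∀ Q ∈ Os, P ≠ Q → Disjoint P Q := by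
    intro P hP Q hQ hne
    obtain ⟨r, _, hmemP⟩ := horb P hP
    obtain ⟨r', _, hmemQ⟩ := horb Q hQ
    exact Stmt11Aux.orbit_disjoint hq r r' P Q hmemP hmemQ hne
  have hst : ∀ P ∈ Os, P.image (Stmt11Aux.g q) = P := fun P hP => (hstr P hP).2.1
  have hRst : R.image (Stmt11Aux.g q) = R := by
    rw [hunion, Finset.biUnion_image]
    exact Finset.biUnion_congr rfl hst
  have hRz : ∀ x ∈ R, x ≠ 0 := by
    intro x hx
    rw [hunion, Finset.mem_biUnion] at hx
    obtain ⟨P, hP, hxP⟩ := hx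
    exact fun h0 => (hstr P hP).2.2.1 (h0 ▸ hxP)
  -- the per-orbit sum values
  have hval : ∀ P ∈ Os, ∑ e ∈ P.sym2.filter (fun e => ¬ e.IsDiag), Stmt11Aux.BL hq e
      = ((P.card + 1 : ℕ) : AlgebraicClosure F) := by
    intro P hP
    obtain ⟨h1, _, _, r, h4, h5, h6⟩ := hstr P hP
    have := Stmt11Aux.orbit_sum hq r P.card h1 h5 h6
    rw [← h4] at this
    rw [this]
    have heq : P.card + 1 = (P.card - 1) + 2 := by omega
    rw [heq]
    push_cast
    rw [CharTwo.two_eq_zero, add_zero]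
  intro S
  have hSdef : S = ∑ e ∈ R.sym2.filter (fun e => ¬ e.IsDiag),
      Sym2.lift ⟨fun u v => u * v / (u - v) ^ 2, by
        intro a b
        show a * b / (a - b) ^ 2 = b * a / (b - a) ^ 2
        rw [mul_comm a b, show (a - b) ^ 2 = (b - a) ^ 2 from by ring]⟩ e := rfl
  set FL : Sym2 (AlgebraicClosure F) → AlgebraicClosure F := Sym2.lift ⟨fun u v => u * v / (u - v) ^ 2, by
        intro a b
        show a * b / (a - b) ^ 2 = b * a / (b - a) ^ 2
        rw [mul_comm a b, show (a - b) ^ 2 = (b - a) ^ 2 from by ring]⟩ with hFL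
  constructor
  · -- S ^ q = S
    rw [hSdef, Stmt11Aux.sum_pow_q hq]
    rw [show (∑ e ∈ R.sym2.filter (fun e => ¬ e.IsDiag), FL e ^ q)
        = ∑ e ∈ R.sym2.filter (fun e => ¬ e.IsDiag), FL (Sym2.map (Stmt11Aux.g q) e) from ?_]
    · exact Stmt11Aux.sum_map_orbit hq R hRst FL
    refine Finset.sum_congr rfl fun e he => ?_
    induction e using Sym2.ind with
    | _ u v =>
      simp only [Finset.mem_filter, Finset.mk_mem_sym2_iff, Sym2.mk_isDiag_iff] at he
      rw [Sym2.map_pair_eq, hFL, Sym2.lift_mk, Sym2.lift_mk]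
      exact Stmt11Aux.f_pow_q hq (hRz u he.1.1) (hRz v he.1.2) he.2
  · -- trace
    rw [hSdef]
    have hswap : ∑ i ∈ Finset.range m,
        (∑ e ∈ R.sym2.filter (fun e => ¬ e.IsDiag), FL e) ^ 2 ^ i
        = ∑ e ∈ R.sym2.filter (fun e => ¬ e.IsDiag), ∑ i ∈ Finset.range m, FL e ^ 2 ^ i := by
      rw [Finset.sum_comm]
      exact Finset.sum_congr rfl fun i _ => Stmt11Aux.sum_pow_two_pow _ _ i
    rw [hswap]
    have hpt : ∀ e ∈ R.sym2.filter (fun e => ¬ e.IsDiag),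
        ∑ i ∈ Finset.range m, FL e ^ 2 ^ i = 1 + Stmt11Aux.BL hq e := by
      intro e he
      induction e using Sym2.ind with
      | _ u v =>
        simp only [Finset.mem_filter, Finset.mk_mem_sym2_iff, Sym2.mk_isDiag_iff] at he
        rw [hFL, Sym2.lift_mk]
        exact Stmt11Aux.tr_pointwise hq (hRz u he.1.1) (hRz v he.1.2) he.2
    rw [Finset.sum_congr rfl hpt, Finset.sum_add_distrib, Finset.sum_const,
      nsmul_eq_mul, mul_one, Stmt11Aux.card_pairs]
    rw [hunion, Stmt11Aux.biUnion_sum hq Os hdi hst hval, ← hunion]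
    have hcardR : R.card = ∑ P ∈ Os, P.card := by
      rw [hunion]
      exact Finset.card_biUnion (fun P hP Q hQ hne => hdi P hP Q hQ hne)
    have hsum : (∑ P ∈ Os, (P.card + 1)) = R.card + t := by
      rw [Finset.sum_add_distrib, Finset.sum_const, smul_eq_mul, mul_one, ht, hcardR]
    rw [hsum]
    have harith : R.card.choose 2 + (R.card + t) = (R.card + 1).choose 2 + t := by
      have h3 : (R.card + 1).choose 2 = R.card.choose 2 + R.card := by
        rw [Nat.choose_succ_succ, Nat.choose_one_right, add_comm]
      omega
    push_cast [← harith]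
    ring
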